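/- Let γ be an antisymmetric real function on pairs of distinct elements of {1,…,N} with zero divergence (Σ_{j≠i} γ(i,j) = 0 for all i). Then for every cyclic sequence of exchanges on the ring ℤ_N, the sum Σ_l log(r(η^{(l)}, η^{(l+1)})/r(η^{(l+1)}, η^{(l)})) with log(r/r') = γ for the exchanged particle pair (in the direction of the move) equals zero; i.e., the Kolmogorov cycle condition holds and the alphabet model with rates c satisfying log(c(i,j)/c(j,i)) = γ(i,j) is reversible. -/

import Mathlib

open Finset
open Fin.NatCast

noncomputable def gam {N : ℕ} (c : Fin N → Fin N → ℝ) (i j : Fin N) : ℝ :=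
  Real.log (c i j / c j i)

lemma gam_anti {N : ℕ} {c : Fin N → Fin N → ℝ} (hc : ∀ i j, 0 < c i j) (i j : Fin N) :
    gam c j i = - gam c i j := by
  unfold gam
  rw [Real.log_div (hc j i).ne' (hc i j).ne', Real.log_div (hc i j).ne' (hc j i).ne']
  ring

lemma gam_self {N : ℕ} {c : Fin N → Fin N → ℝ} (hc : ∀ i j, 0 < c i j) (i : Fin N) :
    gam c i i = 0 := by
  unfold gam
  rw [div_self (hc i i).ne', Real.log_one]

lemma gam_sum {N : ℕ} {c : Fin N → Fin N → ℝ}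
    (hdiv : ∀ i, ∑ j ∈ Finset.univ.erase i, Real.log (c i j / c j i) = 0)
    {i j : Fin N} (hij : j ≠ i) :
    ∑ k ∈ (univ.erase i).erase j, gam c i k = - gam c i j := by
  have h := hdiv i
  have hj : j ∈ univ.erase i := by simp [hij]
  rw [← Finset.add_sum_erase _ _ hj] at h
  unfold gam
  linarith [h]

noncomputable def pot {N : ℕ} [NeZero N] (c : Fin N → Fin N → ℝ) (η : ZMod N ≃ Fin N) : ℝ :=
  ∑ a : ZMod N, ∑ b : ZMod N,
    (if a.val < b.val then (1:ℝ) else 0) * gam c (η a) (η b)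

lemma pot_step {N : ℕ} [NeZero N] {c : Fin N → Fin N → ℝ} (hc : ∀ i j, 0 < c i j)
    (hdiv : ∀ i, ∑ j ∈ Finset.univ.erase i, Real.log (c i j / c j i) = 0)
    (η : ZMod N ≃ Fin N) (x : ZMod N) :
    pot c ((Equiv.swap x (x + 1)).trans η) = pot c η - 2 * gam c (η x) (η (x + 1)) := by
  by_cases hxx : x + 1 = x
  · rw [hxx, Equiv.swap_self, Equiv.refl_trans, gam_self hc]
    ring
  -- notation
  set σ := Equiv.swap x (x + 1) with hσ
  have hσx : σ x = x + 1 := Equiv.swap_apply_left _ _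
  have hσx1 : σ (x + 1) = x := Equiv.swap_apply_right _ _
  have hσσ : ∀ a, σ (σ a) = a := fun a => Equiv.swap_apply_self _ _ _
  have hσo : ∀ a, a ≠ x → a ≠ x + 1 → σ a = a := fun a h1 h2 =>
    Equiv.swap_apply_of_ne_of_ne h1 h2
  set e : ZMod N → ZMod N → ℝ := fun a b => if a.val < b.val then (1:ℝ) else 0 with he
  set D : ZMod N → ZMod N → ℝ :=
    fun a b => (e (σ a) (σ b) - e a b) * gam c (η a) (η b) with hD
  -- reindexing step
  have hre : pot c (σ.trans η) = ∑ a : ZMod N, ∑ b : ZMod N, e (σ a) (σ b) * gam c (η a) (η b) := by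
    unfold pot
    rw [← Finset.sum_product', ← Finset.sum_product']
    refine Fintype.sum_equiv (σ.prodCongr σ)
      (fun p => e (σ p.1) (σ p.2) * gam c (η p.1) (η p.2))
      (fun p => e p.1 p.2 * gam c ((σ.trans η) p.1) ((σ.trans η) p.2)) ?_ |>.symm
    intro p
    simp only [Equiv.prodCongr_apply, Prod.map, Equiv.trans_apply, hσσ]
  have hdiff : pot c (σ.trans η) - pot c η = ∑ a : ZMod N, ∑ b : ZMod N, D a b := by
    rw [hre]
    unfold pot
    rw [← Finset.sum_sub_distrib]
    refine Finset.sum_congr rfl fun a _ => ?_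
    rw [← Finset.sum_sub_distrib]
    refine Finset.sum_congr rfl fun b _ => ?_
    rw [hD]
    ring
  suffices hS : ∑ a : ZMod N, ∑ b : ZMod N, D a b = -2 * gam c (η x) (η (x + 1)) by
    linarith [hdiff]
  -- splitting
  set t : Finset (ZMod N) := (univ.erase x).erase (x + 1) with ht
  have hmt : ∀ a ∈ t, a ≠ x ∧ a ≠ x + 1 := by
    intro a ha
    simp only [ht, mem_erase, mem_univ] at ha
    exact ⟨ha.2.1, ha.1⟩
  have hsplit : ∀ f : ZMod N → ℝ, ∑ a : ZMod N, f a = f x + (f (x + 1) + ∑ a ∈ t, f a) := by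
    intro f
    rw [Finset.add_sum_erase _ _ (Finset.mem_erase.2 ⟨hxx, mem_univ _⟩),
      Finset.add_sum_erase _ _ (mem_univ x)]
  have hzero : ∀ a ∈ t, ∀ b ∈ t, D a b = 0 := by
    intro a ha b hb
    rw [hD]
    simp only
    rw [hσo a (hmt a ha).1 (hmt a ha).2, hσo b (hmt b hb).1 (hmt b hb).2, sub_self, zero_mul]
  have hDexp : ∑ a : ZMod N, ∑ b : ZMod N, D a b =
      (D x x + (D x (x+1) + ∑ b ∈ t, D x b)) +
      ((D (x+1) x + (D (x+1) (x+1) + ∑ b ∈ t, D (x+1) b)) +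
       ∑ a ∈ t, (D a x + (D a (x+1) + 0))) := by
    rw [hsplit (fun a => ∑ b : ZMod N, D a b)]
    rw [hsplit (D x), hsplit (D (x+1))]
    congr 2
    refine Finset.sum_congr rfl fun a ha => ?_
    rw [hsplit (D a)]
    congr 2
    exact Finset.sum_eq_zero (fun b hb => hzero a ha b hb)
  have hN2 : 2 ≤ N := by
    by_contra h
    push_neg at h
    have h0 : N ≠ 0 := NeZero.ne N
    have h1 : N = 1 := by omega
    subst h1
    exact hxx (Subsingleton.elim _ _)
  haveI : Fact (1 < N) := ⟨hN2⟩
  have hvadd : (x + 1).val = (x.val + 1) % N := by rw [ZMod.val_add, ZMod.val_one]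
  have hvlt := ZMod.val_lt x
  have hne : ∀ a b : ZMod N, a ≠ b → a.val ≠ b.val := fun a b h hh =>
    h (ZMod.val_injective N hh)
  have hij : η (x + 1) ≠ η x := fun h => hxx (η.injective h)
  have hji : η x ≠ η (x + 1) := fun h => hij h.symm
  have hDxx : D x x = 0 := by
    rw [hD]; simp only
    rw [gam_self hc, mul_zero]
  have hDx1x1 : D (x+1) (x+1) = 0 := by
    rw [hD]; simp only
    rw [gam_self hc, mul_zero]
  rcases Nat.lt_or_ge (x.val + 1) N with hlt | hge
  · -- interior case
    have hv : (x + 1).val = x.val + 1 := by rw [hvadd, Nat.mod_eq_of_lt hlt]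
    have hDxx1 : D x (x+1) = - gam c (η x) (η (x+1)) := by
      rw [hD]; simp only
      rw [hσx, hσx1, he]; simp only
      have c1 : ¬ ((x+1).val < x.val) := by omega
      have c2 : x.val < (x+1).val := by omega
      rw [if_neg c1, if_pos c2]
      ring
    have hDx1x : D (x+1) x = - gam c (η x) (η (x+1)) := by
      rw [hD]; simp only
      rw [hσx, hσx1, he]; simp only
      have c1 : ¬ ((x+1).val < x.val) := by omega
      have c2 : x.val < (x+1).val := by omega
      rw [if_neg c1, if_pos c2, gam_anti hc]
      ring
    have hb1 : ∀ b ∈ t, D x b = 0 := by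
      intro b hb
      have h1 : b.val ≠ x.val := hne _ _ (hmt b hb).1
      have h2 : b.val ≠ (x+1).val := hne _ _ (hmt b hb).2
      rw [hD]; simp only
      rw [hσx, hσo b (hmt b hb).1 (hmt b hb).2, he]; simp only
      have heq : ((x+1).val < b.val) = (x.val < b.val) := by
        apply propext; constructor <;> intro <;> omega
      simp [heq]
    have hb2 : ∀ b ∈ t, D (x+1) b = 0 := by
      intro b hb
      have h1 : b.val ≠ x.val := hne _ _ (hmt b hb).1
      have h2 : b.val ≠ (x+1).val := hne _ _ (hmt b hb).2
      rw [hD]; simp only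
      rw [hσx1, hσo b (hmt b hb).1 (hmt b hb).2, he]; simp only
      have heq : (x.val < b.val) = ((x+1).val < b.val) := by
        apply propext; constructor <;> intro <;> omega
      simp [heq]
    have hb3 : ∀ a ∈ t, D a x + (D a (x+1) + 0) = 0 := by
      intro a ha
      have h1 : a.val ≠ x.val := hne _ _ (hmt a ha).1
      have h2 : a.val ≠ (x+1).val := hne _ _ (hmt a ha).2
      rw [hD]; simp only
      rw [hσx, hσx1, hσo a (hmt a ha).1 (hmt a ha).2, he]; simp only
      have e1 : (a.val < (x+1).val) = (a.val < x.val) := by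
        apply propext; constructor <;> intro <;> omega
      simp [e1]
    rw [hDexp, hDxx, hDxx1, hDx1x, hDx1x1,
      Finset.sum_eq_zero hb1, Finset.sum_eq_zero hb2, Finset.sum_eq_zero hb3]
    ring
  · -- boundary case
    have hxN : x.val + 1 = N := by omega
    have hv : (x + 1).val = 0 := by rw [hvadd, hxN, Nat.mod_self]
    have hu : x.val = N - 1 := by omega
    have hDxx1 : D x (x+1) = gam c (η x) (η (x+1)) := by
      rw [hD]; simp only
      rw [hσx, hσx1, he]; simp only
      have c1 : (x+1).val < x.val := by omega
      have c2 : ¬ (x.val < (x+1).val) := by omega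
      rw [if_pos c1, if_neg c2]
      ring
    have hDx1x : D (x+1) x = gam c (η x) (η (x+1)) := by
      rw [hD]; simp only
      rw [hσx, hσx1, he]; simp only
      have c1 : (x+1).val < x.val := by omega
      have c2 : ¬ (x.val < (x+1).val) := by omega
      rw [if_pos c1, if_neg c2, gam_anti hc]
      ring
    have hbfacts : ∀ b ∈ t, b.val ≠ 0 ∧ b.val ≠ N - 1 ∧ b.val < N := by
      intro b hb
      have h1 : b.val ≠ x.val := hne _ _ (hmt b hb).1
      have h2 : b.val ≠ (x+1).val := hne _ _ (hmt b hb).2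
      exact ⟨by omega, by omega, ZMod.val_lt b⟩
    have hb1 : ∀ b ∈ t, D x b = gam c (η x) (η b) := by
      intro b hb
      obtain ⟨h1, h2, h3⟩ := hbfacts b hb
      rw [hD]; simp only
      rw [hσx, hσo b (hmt b hb).1 (hmt b hb).2, he]; simp only
      have c1 : (x+1).val < b.val := by omega
      have c2 : ¬ (x.val < b.val) := by omega
      rw [if_pos c1, if_neg c2]
      ring
    have hb2 : ∀ b ∈ t, D (x+1) b = - gam c (η (x+1)) (η b) := by
      intro b hb
      obtain ⟨h1, h2, h3⟩ := hbfacts b hb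
      rw [hD]; simp only
      rw [hσx1, hσo b (hmt b hb).1 (hmt b hb).2, he]; simp only
      have c1 : ¬ (x.val < b.val) := by omega
      have c2 : (x+1).val < b.val := by omega
      rw [if_neg c1, if_pos c2]
      ring
    have hb3 : ∀ a ∈ t, D a x + (D a (x+1) + 0) =
        gam c (η x) (η a) - gam c (η (x+1)) (η a) := by
      intro a ha
      obtain ⟨h1, h2, h3⟩ := hbfacts a ha
      rw [hD]; simp only
      rw [hσx, hσx1, hσo a (hmt a ha).1 (hmt a ha).2, he]; simp only
      have c1 : a.val < x.val := by omega
      have c2 : ¬ (a.val < (x+1).val) := by omega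
      rw [if_pos c1, if_neg c2, gam_anti hc (η x) (η a), gam_anti hc (η (x+1)) (η a)]
      ring
    have himg : t.image η = (univ.erase (η x)).erase (η (x+1)) := by
      rw [ht, Finset.image_erase η.injective, Finset.image_erase η.injective,
        Finset.image_univ_equiv]
    have hsum1 : ∑ b ∈ t, gam c (η x) (η b) = - gam c (η x) (η (x+1)) := by
      rw [← gam_sum hdiv hij, ← himg,
        Finset.sum_image (fun b _ b' _ h => η.injective h)]
    have hsum2 : ∑ b ∈ t, gam c (η (x+1)) (η b) = gam c (η x) (η (x+1)) := by
      rw [show ∑ b ∈ t, gam c (η (x+1)) (η b) =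
          ∑ k ∈ (univ.erase (η (x+1))).erase (η x), gam c (η (x+1)) k from ?_,
        gam_sum hdiv hji, gam_anti hc]
      · ring
      · rw [Finset.erase_right_comm, ← himg,
          Finset.sum_image (fun b _ b' _ h => η.injective h)]
    rw [hDexp, hDxx, hDxx1, hDx1x, hDx1x1,
      Finset.sum_congr rfl hb1, Finset.sum_congr rfl hb2, Finset.sum_congr rfl hb3,
      Finset.sum_sub_distrib, Finset.sum_neg_distrib, hsum1, hsum2]
    ring

/-- if `γ(i,j) = log (c i j / c j i)` is divergence free, then
the Kolmogorov cycle condition holds along every cycle in the configuration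
space of the alphabet model on the ring `ℤ_N`, i.e. the model is reversible. -/
theorem stmt_13 (N : ℕ) (hN : 0 < N)
    (c : Fin N → Fin N → ℝ) (hc : ∀ i j, 0 < c i j)
    (hdiv : ∀ i, ∑ j ∈ Finset.univ.erase i, Real.log (c i j / c j i) = 0)
    (L : ℕ) (η : Fin (L + 1) → (ZMod N ≃ Fin N)) (x : Fin L → ZMod N)
    (hstep : ∀ l : Fin L,
      η l.succ = (Equiv.swap (x l) (x l + 1)).trans (η l.castSucc))
    (hcyc : η (Fin.last L) = η 0) :
    ∑ l : Fin L,
      Real.log (c (η l.castSucc (x l)) (η l.castSucc (x l + 1)) /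
        c (η l.castSucc (x l + 1)) (η l.castSucc (x l))) = 0 := by
  haveI : NeZero N := ⟨hN.ne'⟩
  set f : ℕ → ℝ := fun n => pot c (η (n : Fin (L + 1))) with hf
  have hcast : ∀ l : Fin L, ((l : ℕ) : Fin (L + 1)) = l.castSucc := by
    intro l
    ext
    simp [Fin.val_cast_of_lt (Nat.lt_succ_of_lt l.isLt)]
  have hcast' : ∀ l : Fin L, (((l : ℕ) + 1 : ℕ) : Fin (L + 1)) = l.succ := by
    intro l
    ext
    simp [Fin.val_cast_of_lt (Nat.succ_lt_succ l.isLt)]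
  have key : ∀ l : Fin L,
      Real.log (c (η l.castSucc (x l)) (η l.castSucc (x l + 1)) /
        c (η l.castSucc (x l + 1)) (η l.castSucc (x l))) =
      (f (l : ℕ) - f ((l : ℕ) + 1)) / 2 := by
    intro l
    have h := pot_step hc hdiv (η l.castSucc) (x l)
    rw [← hstep l] at h
    have : f (l : ℕ) = pot c (η l.castSucc) := by rw [hf]; simp only; rw [hcast]
    have h2 : f ((l : ℕ) + 1) = pot c (η l.succ) := by rw [hf]; simp only; rw [hcast']
    rw [this, h2, h]
    show gam c (η l.castSucc (x l)) (η l.castSucc (x l + 1)) = _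
    ring
  rw [Finset.sum_congr rfl (fun l _ => key l)]
  have := Fin.sum_univ_eq_sum_range (fun n => (f n - f (n + 1)) / 2) L
  rw [this, ← Finset.sum_div, Finset.sum_range_sub' f L]
  have hL : ((L : ℕ) : Fin (L + 1)) = Fin.last L := by
    ext
    simp [Fin.val_cast_of_lt (Nat.lt_succ_self L)]
  have hf0 : f 0 = pot c (η 0) := by simp only [hf, Nat.cast_zero]
  have hfL : f L = pot c (η (Fin.last L)) := by simp only [hf, hL]
  rw [hf0, hfL, hcyc, sub_self, zero_div]
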